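/- arXiv:2101.09027 — 3 statements merged into one kernel-verified Lean document; each statement's English description precedes it below -/
import Mathlib

section
/- Define the Laplace–Robin operator L(g,σ;λ)u = (n+2λ-1)(⟨grad_g σ, grad u⟩ + λρ u) - σ(Δ_g u + λ J u), where 2n J = scal(g) and (n+1)ρ = -Δ_g σ - σ J, and define S(g,σ) = |dσ|_g^2 + 2σρ. Then on the set where σ > 0, for every λ ∈ ℂ and every smooth function u: L(g,σ;λ)u + σ^{λ-1}(Δ_{σ^{-2}g} - λ(n+λ))(σ^{-λ}u) = λ(n+λ)σ^{-1}(S(g,σ)-1)u. -/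
/-- Abstract calculus on a commutative `ℂ`-algebra `A` of (complex-valued smooth) functions on a
Riemannian manifold `(X,g)` of dimension `n+1`, together with a positive function `σ` and its
complex powers `pow a = σ^a`:
* `lap` is the Laplacian `Δ_g`, `grad u v = ⟨grad_g u, grad_g v⟩_g` the gradient pairing;
* both satisfy the usual Leibniz rules, and the powers `σ^a` obey the chain rules
  `⟨grad σ^a, grad u⟩ = a σ^{a-1} ⟨grad σ, grad u⟩` and
  `Δ(σ^a) = a σ^{a-1} Δσ + a(a-1) σ^{a-2} |grad σ|²`. -/
structure ConformalCalculus (A : Type*) [CommRing A] [Algebra ℂ A] where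
  lap : A →ₗ[ℂ] A
  grad : A →ₗ[ℂ] A →ₗ[ℂ] A
  grad_symm : ∀ u v, grad u v = grad v u
  grad_leibniz : ∀ u v w, grad (u * v) w = u * grad v w + v * grad u w
  lap_leibniz : ∀ u v, lap (u * v) = u * lap v + v * lap u + 2 * grad u v
  pow : ℂ → A
  pow_zero' : pow 0 = 1
  pow_add' : ∀ a b : ℂ, pow (a + b) = pow a * pow b
  grad_pow : ∀ (a : ℂ) (u : A), grad (pow a) u = a • (pow (a - 1) * grad (pow 1) u)
  lap_pow : ∀ a : ℂ, lap (pow a)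
    = a • (pow (a - 1) * lap (pow 1)) + (a * (a - 1)) • (pow (a - 2) * grad (pow 1) (pow 1))

namespace ConformalCalculus

variable {A : Type*} [CommRing A] [Algebra ℂ A]

/-- The defining function `σ`. -/
def σ (d : ConformalCalculus A) : A := d.pow 1

/-- `(n+1) ρ = -Δ_g σ - σ J`, where `2nJ = scal(g)`. -/
noncomputable def ρ (n : ℕ) (d : ConformalCalculus A) (J : A) : A :=
  (-(((n : ℂ) + 1)⁻¹)) • (d.lap d.σ + d.σ * J)

/-- `S(g,σ) = |dσ|_g² + 2σρ`. -/
noncomputable def S (n : ℕ) (d : ConformalCalculus A) (J : A) : A :=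
  d.grad d.σ d.σ + 2 * d.σ * d.ρ n J

/-- The Laplace–Robin operator
`L(g,σ;λ)u = (n+2λ-1)(⟨grad σ, grad u⟩ + λρu) - σ(Δ_g u + λJu)`. -/
noncomputable def L (n : ℕ) (d : ConformalCalculus A) (J : A) (lam : ℂ) (u : A) : A :=
  ((n : ℂ) + 2 * lam - 1) • (d.grad d.σ u + lam • (d.ρ n J * u))
    - d.σ * (d.lap u + lam • (J * u))

/-- The Laplacian of the conformally rescaled metric `σ^{-2}g`:
`Δ_{σ^{-2}g} u = σ² Δ_g u - (n-1) σ ⟨grad σ, grad u⟩`. -/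
noncomputable def lapConf (n : ℕ) (d : ConformalCalculus A) (u : A) : A :=
  d.σ ^ 2 * d.lap u - ((n : ℂ) - 1) • (d.σ * d.grad d.σ u)

end ConformalCalculus

open ConformalCalculus

/-- **conjugation formula.** For every `λ ∈ ℂ` and every smooth `u`, on the set
where `σ > 0`:
`L(g,σ;λ)u + σ^{λ-1}(Δ_{σ^{-2}g} - λ(n+λ))(σ^{-λ}u) = λ(n+λ) σ^{-1} (S(g,σ)-1) u`. -/
theorem conjugation_formula {A : Type*} [CommRing A] [Algebra ℂ A]
    (n : ℕ) (d : ConformalCalculus A) (J : A) (lam : ℂ) (u : A) :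
    d.L n J lam u
      + d.pow (lam - 1) *
          (d.lapConf n (d.pow (-lam) * u) - (lam * ((n : ℂ) + lam)) • (d.pow (-lam) * u))
      = (lam * ((n : ℂ) + lam)) • (d.pow (-1) * ((d.S n J - 1) * u)) := by
  have pmul : ∀ a b : ℂ, d.pow a * d.pow b = d.pow (a+b) := fun a b => (d.pow_add' a b).symm
  have hN : ((n:ℂ) + 1) ≠ 0 := by
    exact_mod_cast (Nat.cast_add_one_ne_zero n : ((n:ℂ) + 1) ≠ 0)
  have hinv : algebraMap ℂ A (((n:ℂ)+1)⁻¹) * (algebraMap ℂ A (n:ℂ) + 1) = 1 := by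
    rw [show (algebraMap ℂ A (n:ℂ) + 1) = algebraMap ℂ A ((n:ℂ)+1) by simp, ← map_mul,
      inv_mul_cancel₀ hN, map_one]
  have e1 : d.pow (lam-1) * (d.pow 1 * (d.pow 1 * d.pow (-lam))) = d.pow 1 := by
    rw [pmul, pmul, pmul]; congr 1; ring
  have e2 : d.pow (lam-1) * (d.pow 1 * (d.pow 1 * d.pow (-lam-1))) = 1 := by
    rw [pmul, pmul, pmul, show lam-1+(1+(1+(-lam-1))) = 0 by ring, d.pow_zero']
  have e3 : d.pow (lam-1) * (d.pow 1 * (d.pow 1 * d.pow (-lam-2))) = d.pow (-1) := by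
    rw [pmul, pmul, pmul]; congr 1; ring
  have e4 : d.pow (lam-1) * (d.pow 1 * d.pow (-lam)) = 1 := by
    rw [pmul, pmul, show lam-1+(1+(-lam)) = 0 by ring, d.pow_zero']
  have e5 : d.pow (lam-1) * (d.pow 1 * d.pow (-lam-1)) = d.pow (-1) := by
    rw [pmul, pmul]; congr 1; ring
  have e6 : d.pow (lam-1) * d.pow (-lam) = d.pow (-1) := by
    rw [pmul]; congr 1; ring
  have e7 : d.pow (-1) * d.pow 1 = 1 := by
    rw [pmul, show (-1:ℂ)+1 = 0 by ring, d.pow_zero']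
  set l := algebraMap ℂ A lam with hl
  set N := algebraMap ℂ A (n:ℂ) with hNdef
  set r := algebraMap ℂ A (((n:ℂ)+1)⁻¹) with hr
  simp only [L, lapConf, S, ρ, ConformalCalculus.σ]
  rw [d.lap_leibniz, d.grad_symm (d.pow 1) (d.pow (-lam) * u), d.grad_leibniz,
    d.grad_symm u (d.pow 1)]
  simp only [d.grad_pow (-lam), d.lap_pow (-lam)]
  simp only [Algebra.smul_def, map_add, map_sub, map_mul, map_one, map_neg, map_ofNat, pow_two]
  linear_combination (d.lap u) * e1
    + (-(l * (d.lap (d.pow 1) * u + 2 * d.grad (d.pow 1) u))) * e2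
    + (l * (l + 1) * (d.grad (d.pow 1) (d.pow 1) * u)) * e3
    + (-((N - 1) * d.grad (d.pow 1) u)) * e4
    + ((N - 1) * l * (d.grad (d.pow 1) (d.pow 1) * u)) * e5
    + (-(l * (N + l) * u)) * e6
    + (2 * l * (N + l) * r * ((d.lap (d.pow 1) + d.pow 1 * J) * u)) * e7
    + (l * ((d.lap (d.pow 1) + d.pow 1 * J) * u)) * hinv
end

section
/- Suppose S(g,σ) = 1 on an open set where σ > 0. If u is a smooth function with Δ_{σ^{-2}g} u = -μ(n-μ) u, then for every λ: L(g,σ;λ+1)(σ^{λ+1} u) = (λ+μ+1)(λ-μ+n+1) σ^λ u. -/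
open ConformalCalculus


open ConformalCalculus

/-- **Bernstein–Sato functional equation.** Suppose `S(g,σ) = 1` on an open set
where `σ > 0`.  If `u` is a smooth function with `Δ_{σ^{-2}g} u = -μ(n-μ) u`, then for every `λ`:
`L(g,σ;λ+1)(σ^{λ+1} u) = (λ+μ+1)(λ-μ+n+1) σ^λ u`. -/
theorem bernstein_sato_functional_equation {A : Type*} [CommRing A] [Algebra ℂ A]
    (n : ℕ) (d : ConformalCalculus A) (J : A) (hS : d.S n J = 1)
    (μ : ℂ) (u : A) (hu : d.lapConf n u = (-(μ * ((n : ℂ) - μ))) • u) (lam : ℂ) :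
    d.L n J (lam + 1) (d.pow (lam + 1) * u)
      = ((lam + μ + 1) * (lam - μ + (n : ℂ) + 1)) • (d.pow lam * u) := by
  have hn : ((n:ℂ)+1) ≠ 0 := Nat.cast_add_one_ne_zero n
  have hρ : d.lap (d.pow 1) = (-((n:ℂ)+1)) • d.ρ n J - d.pow 1 * J := by
    have h1 : (-((n:ℂ)+1)) • d.ρ n J = d.lap (d.pow 1) + d.pow 1 * J := by
      rw [ConformalCalculus.ρ, ConformalCalculus.σ, smul_smul,
        show (-((n:ℂ)+1)) * (-(((n:ℂ)+1)⁻¹)) = 1 by field_simp, one_smul]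
    rw [h1]; ring
  have hS' : d.grad (d.pow 1) (d.pow 1) = 1 - 2 * d.pow 1 * d.ρ n J := by
    rw [ConformalCalculus.S, ConformalCalculus.σ] at hS; linear_combination hS
  have hu' : d.pow 1 ^ 2 * d.lap u
      = ((n : ℂ) - 1) • (d.pow 1 * d.grad (d.pow 1) u) + (-(μ * ((n : ℂ) - μ))) • u := by
    rw [ConformalCalculus.lapConf, ConformalCalculus.σ] at hu; linear_combination hu
  have hp1 : d.pow (lam+1) = d.pow lam * d.pow 1 := d.pow_add' lam 1
  have hp2 : d.pow lam = d.pow (lam-1) * d.pow 1 := by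
    rw [← d.pow_add' (lam-1) 1, sub_add_cancel]
  have hg1 : d.grad (d.pow (lam+1)) u = (lam+1) • (d.pow lam * d.grad (d.pow 1) u) := by
    rw [d.grad_pow, show lam+1-1 = lam by ring]
  have hg2 : d.grad (d.pow (lam+1)) (d.pow 1)
      = (lam+1) • (d.pow lam * d.grad (d.pow 1) (d.pow 1)) := by
    rw [d.grad_pow, show lam+1-1 = lam by ring]
  have hl1 : d.lap (d.pow (lam+1)) = (lam+1) • (d.pow lam * d.lap (d.pow 1))
      + ((lam+1)*lam) • (d.pow (lam-1) * d.grad (d.pow 1) (d.pow 1)) := by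
    rw [d.lap_pow, show lam+1-1 = lam by ring, show lam+1-2 = lam-1 by ring]
  rw [ConformalCalculus.L, ConformalCalculus.σ,
    d.grad_symm (d.pow 1) (d.pow (lam+1) * u),
    d.grad_leibniz (d.pow (lam+1)) u (d.pow 1),
    d.grad_symm u (d.pow 1),
    d.lap_leibniz (d.pow (lam+1)) u,
    hg1, hg2, hl1, hρ, hS', hp1, hp2]
  simp only [Algebra.smul_def, map_add, map_mul, map_sub, map_neg, map_one, map_ofNat,
    map_natCast] at hu' ⊢
  linear_combination (-(d.pow (lam-1) * d.pow 1)) * hu'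
end

section
/- Suppose ρ, J, v are smooth functions of s near 0 (valued in smooth functions on M), v(0)=1, a = 1 - 2sρ, and the identity v'/v = (-(n-1)ρ + 2sρ' - sJ)/(1 - 2sρ) holds as formal power series in s. Write v(s) = 1 + Σ_{k≥1} v_k s^k. Then v₁ = -(n-1)ρ(0), and 2v₂ - v₁² = -(n-3)ρ'(0) - J(0) - 2(n-1)ρ(0)². -/
open PowerSeries

/-- Suppose `ρ, J, v` are formal power series in `s` (with coefficients in a
commutative ring `A` of functions on `M`), `v(0) = 1`, and the identity
`v'/v = (-(n-1)ρ + 2sρ' - sJ)/(1 - 2sρ)` holds as formal power series, i.e.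
`v'·(1 - 2sρ) = (-(n-1)ρ + 2sρ' - sJ)·v`.  Writing `v = 1 + ∑_{k≥1} v_k s^k`, one has
`v₁ = -(n-1)ρ(0)` and `2v₂ - v₁² = -(n-3)ρ'(0) - J(0) - 2(n-1)ρ(0)²`. -/
theorem renormalized_volume_coefficients_low_order
    {A : Type*} [CommRing A] (n : ℕ)
    (ρ J v : PowerSeries A)
    (hv0 : constantCoeff v = 1)
    (hODE : (derivative A v) * (1 - 2 * X * ρ)
      = (C (-((n : A) - 1)) * ρ + 2 * X * derivative A ρ - X * J) * v) :
    coeff 1 v = -((n : A) - 1) * constantCoeff ρ ∧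
    2 * coeff 2 v - (coeff 1 v) ^ 2
      = -((n : A) - 3) * constantCoeff (derivative A ρ)
        - constantCoeff J - 2 * ((n : A) - 1) * (constantCoeff ρ) ^ 2 := by
  rw [show (2 : PowerSeries A) = C 2 from (map_ofNat _ 2).symm] at hODE
  have hn : (coeff 1) ((n : ℕ) : PowerSeries A) = 0 := by
    rw [← map_natCast (C : A →+* PowerSeries A) n, coeff_C]; simp
  have h0 := congrArg (fun p : PowerSeries A => coeff 0 p) hODE
  have h1 := congrArg (fun p : PowerSeries A => coeff 1 p) hODE
  simp [coeff_mul, Finset.Nat.sum_antidiagonal_eq_sum_range_succ_mk, Finset.sum_range_succ,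
    coeff_derivative, coeff_one, coeff_X, coeff_C, coeff_zero_eq_constantCoeff, hv0, hn] at h0 h1
  refine ⟨by linear_combination h0, ?_⟩
  have hd : constantCoeff (derivative A ρ) = coeff 1 ρ := by
    simpa using coeff_derivative ρ 0
  rw [hd]
  linear_combination h1 + (-(coeff 1 v) + 2 * constantCoeff ρ) * h0
end
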